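/- (Lemma: bond irreps of an injective symmetric MPS all belong to a single projective class.) Let N ≥ 1, let ι be a finite type, let A : ι → Matrix (Fin N) (Fin N) ℂ, let ω ∈ ℂ with ω ≠ 1, and let X ∈ Matrix (Fin N) (Fin N) ℂ be unitary with ω • A m = Xᴴ * A m * X for all m : ι (X implements a nontrivial projective phase ω on the MPS tensor). Then for every I ≥ 1 the map Γ_I is not injective. -/

import Mathlib

open Matrix

/-- The MPS map `Γ_I`: given an MPS tensor `A`, length `I` and a boundary matrix `M`,
returns the coefficient function `σ ↦ trace (M * A (σ 0) * ⋯ * A (σ (I-1)))`. -/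
noncomputable def GammaMPS {N : ℕ} {ι : Type*} (A : ι → Matrix (Fin N) (Fin N) ℂ)
    (I : ℕ) (M : Matrix (Fin N) (Fin N) ℂ) : (Fin I → ι) → ℂ :=
  fun σ => Matrix.trace (M * (List.ofFn fun i => A (σ i)).prod)

/-- Lemma: if a unitary `X` implements a nontrivial projective phase `ω ≠ 1` on the MPS
tensor, i.e. `ω • A m = Xᴴ * A m * X` for all `m`, then `Γ_I` is not injective for any
length `I`. -/
theorem nontrivial_phase_not_injective {N : ℕ} (hN : 1 ≤ N) {ι : Type*} [Fintype ι]
    (A : ι → Matrix (Fin N) (Fin N) ℂ)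
    (ω : ℂ) (hω : ω ≠ 1)
    (X : Matrix (Fin N) (Fin N) ℂ)
    (hX : X ∈ Matrix.unitaryGroup (Fin N) ℂ)
    (hconj : ∀ m : ι, ω • A m = Xᴴ * A m * X) :
    ∀ I, 1 ≤ I → ¬ Function.Injective (GammaMPS A I) := by
  intro I hI hinj
  have i0 : Fin N := ⟨0, hN⟩
  have hX1 : Xᴴ * X = 1 := hX.1
  have hX2 : X * Xᴴ = 1 := hX.2
  -- the contradiction we derive in both cases
  have hcontr : GammaMPS A I (1 : Matrix (Fin N) (Fin N) ℂ) = GammaMPS A I 0 → False := by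
    intro h10
    have h := hinj h10
    have : (1 : Matrix (Fin N) (Fin N) ℂ) i0 i0 = 0 := by rw [h]; rfl
    rw [Matrix.one_apply_eq] at this
    exact one_ne_zero this
  -- key conjugation identity for products
  have key : ∀ l : List ι, Xᴴ * (l.map A).prod * X = ω ^ l.length • (l.map A).prod := by
    intro l
    induction l with
    | nil => simpa using hX1
    | cons a l ih =>
      simp only [List.map_cons, List.prod_cons, List.length_cons]
      have h1 : Xᴴ * (A a * (l.map A).prod) * X
          = (Xᴴ * A a * X) * (Xᴴ * (l.map A).prod * X) := by
        calc Xᴴ * (A a * (l.map A).prod) * X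
            = Xᴴ * A a * ((X * Xᴴ) * ((l.map A).prod * X)) := by
              rw [hX2, one_mul]; noncomm_ring
          _ = (Xᴴ * A a * X) * (Xᴴ * (l.map A).prod * X) := by noncomm_ring
      rw [h1, ← hconj a, ih, smul_mul_smul_comm, pow_succ, mul_comm (ω ^ l.length) ω]
  -- Gamma transforms by ω^I under conjugating the boundary matrix
  have hGamma : ∀ (M : Matrix (Fin N) (Fin N) ℂ) (σ : Fin I → ι),
      GammaMPS A I (X * M * Xᴴ) σ = ω ^ I • GammaMPS A I M σ := by
    intro M σ
    have hl : (List.ofFn fun i => A (σ i)) = (List.ofFn σ).map A := by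
      rw [List.map_ofFn]; rfl
    have hk := key (List.ofFn σ)
    rw [List.length_ofFn] at hk
    simp only [GammaMPS, hl]
    calc Matrix.trace (X * M * Xᴴ * ((List.ofFn σ).map A).prod)
        = Matrix.trace (M * (Xᴴ * ((List.ofFn σ).map A).prod * X)) := by
          rw [show X * M * Xᴴ * ((List.ofFn σ).map A).prod
              = X * (M * (Xᴴ * ((List.ofFn σ).map A).prod)) by noncomm_ring,
            Matrix.trace_mul_comm,
            show M * (Xᴴ * ((List.ofFn σ).map A).prod) * X
              = M * (Xᴴ * ((List.ofFn σ).map A).prod * X) by noncomm_ring]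
      _ = Matrix.trace (M * (ω ^ I • ((List.ofFn σ).map A).prod)) := by rw [hk]
      _ = ω ^ I • Matrix.trace (M * ((List.ofFn σ).map A).prod) := by
          rw [Matrix.mul_smul, Matrix.trace_smul]
  by_cases hωI : ω ^ I = 1
  · -- then conjugation by X fixes Gamma, so X is central, hence scalar, hence A = 0
    have hfix : ∀ M : Matrix (Fin N) (Fin N) ℂ, X * M * Xᴴ = M := by
      intro M
      apply hinj
      funext σ
      rw [hGamma M σ, hωI, one_smul]
    have hcomm : ∀ M : Matrix (Fin N) (Fin N) ℂ, X * M = M * X := by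
      intro M
      have := congrArg (· * X) (hfix M)
      simpa [Matrix.mul_assoc, hX1] using this
    obtain ⟨c, hc⟩ := Matrix.mem_range_scalar_of_commute_single
      (M := X) (fun i j _ => (hcomm _).symm)
    have hX' : X = c • (1 : Matrix (Fin N) (Fin N) ℂ) := by
      rw [← hc]; simp [Matrix.scalar_apply, Matrix.smul_one_eq_diagonal]
    have hA : ∀ m : ι, A m = 0 := by
      intro m
      have h1 : ω • A m = (c * starRingEnd ℂ c) • A m := by
        rw [hconj m, hX']
        simp [Matrix.conjTranspose_smul, smul_mul_assoc, mul_smul_comm, smul_smul]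
      have h2 : (c * starRingEnd ℂ c) = 1 := by
        have := hX1
        rw [hX'] at this
        simp only [Matrix.conjTranspose_smul, Matrix.conjTranspose_one,
          smul_mul_assoc, mul_smul_comm, smul_smul, Matrix.mul_one] at this
        have := congrFun (congrFun this i0) i0
        simpa [Matrix.smul_apply, Matrix.one_apply_eq] using this
      rw [h2, one_smul] at h1
      have : (ω - 1) • A m = 0 := by rw [sub_smul, h1, one_smul, sub_self]
      rcases smul_eq_zero.mp this with h | h
      · exact absurd (sub_eq_zero.mp h) hω
      · exact h
    apply hcontr
    funext σ
    obtain ⟨n, rfl⟩ : ∃ n, I = n + 1 := ⟨I - 1, by omega⟩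
    simp [GammaMPS, List.ofFn_succ, hA]
  · -- ω^I ≠ 1 : Gamma 1 = 0 = Gamma 0
    apply hcontr
    funext σ
    have h := hGamma 1 σ
    rw [Matrix.mul_one, hX2] at h
    have : (1 - ω ^ I) * GammaMPS A I 1 σ = 0 := by
      rw [sub_mul, one_mul]
      rw [smul_eq_mul] at h
      linear_combination h
    have h0 : GammaMPS A I 1 σ = 0 := by
      rcases mul_eq_zero.mp this with h' | h'
      · exact absurd (by linear_combination -h' : ω ^ I = 1) hωI
      · exact h'
    rw [h0]
    simp [GammaMPS]
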